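/- arXiv:0704.2919 — 2 statements merged into one kernel-verified Lean document; each statement's English description precedes it below -/
import Mathlib

section
/- A family B of finite sets containing the empty set is the base of a ∪-closed well-graded family if and only if every nonempty X ∈ B has exactly one endpoint. -/
open Finset

variable {α : Type*} [DecidableEq α]

/-- The span of a family `G`: all unions of nonempty subfamilies of `G`. -/
def Span (G : Finset (Finset α)) : Finset (Finset α) :=
  (G.powerset.filter Finset.Nonempty).image fun H => H.sup id

/-- A family is ∪-closed if it contains the union of each of its nonempty subfamilies. -/
def UnionClosed (F : Finset (Finset α)) : Prop :=
  ∀ H ⊆ F, H.Nonempty → H.sup id ∈ F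

/-- `p` is a tight path from `P` to `Q` inside the family `F`. -/
def IsTightPath (F : Finset (Finset α)) (P Q : Finset α) (p : List (Finset α)) : Prop :=
  p.head? = some P ∧ p.getLast? = some Q ∧
  p.length = (symmDiff P Q).card + 1 ∧
  (∀ S ∈ p, S ∈ F) ∧
  List.Chain' (fun A B => (symmDiff A B).card = 1) p

/-- A family is well-graded if any two distinct members are joined by a tight path. -/
def WellGraded (F : Finset (Finset α)) : Prop :=
  ∀ P ∈ F, ∀ Q ∈ F, P ≠ Q → ∃ p, IsTightPath F P Q p

/-- `B` is a base of `F`: a minimal subfamily of `F` spanning `F`. -/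
def IsBase (B F : Finset (Finset α)) : Prop :=
  B ⊆ F ∧ Span B = F ∧ ∀ H ⊆ B, Span H = F → H = B

/-- `A` is an atom of `F` at `x`: an inclusion-minimal member of `F` containing `x`. -/
def IsAtomAt (F : Finset (Finset α)) (x : α) (A : Finset α) : Prop :=
  A ∈ F ∧ x ∈ A ∧ ∀ B ∈ F, x ∈ B → B ⊆ A → B = A

/-- `A` is an atom of `F`: either the empty set (if it is in `F`) or an atom at some point. -/
def IsAtomOf (F : Finset (Finset α)) (A : Finset α) : Prop :=
  (A = ∅ ∧ A ∈ F) ∨ ∃ x, IsAtomAt F x A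

/-- The surmise function: the collection of atoms of `F` at `x`. -/
def surmise (F : Finset (Finset α)) (x : α) : Finset (Finset α) :=
  F.filter fun A => x ∈ A ∧ ∀ B ∈ F, x ∈ B → B ⊆ A → B = A

/-- `{σ(x) : x ∈ ∪F}` forms a partition of `B \ {∅}`. -/
def SurmisePartition (F B : Finset (Finset α)) : Prop :=
  (∀ x ∈ F.sup id, ∀ y ∈ F.sup id,
      surmise F x = surmise F y ∨ Disjoint (surmise F x) (surmise F y)) ∧
  (F.sup id).sup (surmise F) = B.erase ∅

/-- The endpoints of `X` in the family `B`: elements of `X` lying in no proper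
subset of `X` belonging to `B`. -/
def endpoints (B : Finset (Finset α)) (X : Finset α) : Finset α :=
  X \ (B.filter fun Y => Y ⊂ X).sup id

/-- A family is discriminative if points contained in the same members are equal. -/
def Discriminative (F : Finset (Finset α)) : Prop :=
  ∀ u ∈ F.sup id, ∀ v ∈ F.sup id, (∀ S ∈ F, (u ∈ S ↔ v ∈ S)) → u = v


section Helpers

lemma mem_span {B : Finset (Finset α)} {S : Finset α} :
    S ∈ Span B ↔ ∃ H, H ⊆ B ∧ H.Nonempty ∧ H.sup id = S := by
  simp only [Span, Finset.mem_image, Finset.mem_filter, Finset.mem_powerset]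
  tauto

lemma eq_sup_filter_of_mem_span {B : Finset (Finset α)} {S : Finset α} (h : S ∈ Span B) :
    (B.filter (· ⊆ S)).sup id = S := by
  obtain ⟨H, hHB, hne, hsup⟩ := mem_span.1 h
  apply le_antisymm
  · exact Finset.sup_le fun Z hZ => (Finset.mem_filter.1 hZ).2
  · rw [← hsup]
    exact Finset.sup_le fun Z hZ => Finset.le_sup (f := id)
      (Finset.mem_filter.2 ⟨hHB hZ, hsup ▸ Finset.le_sup (f := id) hZ⟩)

lemma sup_filter_mem_span {B : Finset (Finset α)} (hempty : (∅ : Finset α) ∈ B)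
    (K : Finset α) : (B.filter (· ⊆ K)).sup id ∈ Span B :=
  mem_span.2 ⟨B.filter (· ⊆ K), Finset.filter_subset _ _,
    ⟨∅, Finset.mem_filter.2 ⟨hempty, by simp⟩⟩, rfl⟩

lemma span_unionClosed {B : Finset (Finset α)} (hempty : (∅ : Finset α) ∈ B) :
    UnionClosed (Span B) := by
  intro H hH _
  set K := H.sup id with hK
  have : (B.filter (· ⊆ K)).sup id = K := by
    apply le_antisymm
    · exact Finset.sup_le fun Z hZ => (Finset.mem_filter.1 hZ).2
    · intro x hx
      obtain ⟨S, hSH, hxS⟩ := Finset.mem_sup.1 hx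
      have hSspan := hH hSH
      have := eq_sup_filter_of_mem_span hSspan
      have hxS' : x ∈ (B.filter (· ⊆ S)).sup id := by rw [this]; exact hxS
      obtain ⟨Z, hZ, hxZ⟩ := Finset.mem_sup.1 hxS'
      obtain ⟨hZB, hZS⟩ := Finset.mem_filter.1 hZ
      exact Finset.mem_sup.2 ⟨Z, Finset.mem_filter.2
        ⟨hZB, hZS.trans (Finset.le_sup (f := id) hSH)⟩, hxZ⟩
  exact this ▸ sup_filter_mem_span hempty K

lemma mem_endpoints {B : Finset (Finset α)} {X : Finset α} {x : α} :
    x ∈ endpoints B X ↔ x ∈ X ∧ ∀ Y ∈ B, Y ⊂ X → x ∉ Y := by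
  simp only [endpoints, Finset.mem_sdiff, Finset.mem_sup, Finset.mem_filter, id_eq]
  push_neg
  tauto

/-- Key up-lemma, by strong induction on the cardinality of `Y ∈ B`. -/
lemma up_lemma {B : Finset (Finset α)}
    (hB : ∀ X ∈ B, X ≠ ∅ → (endpoints B X).card = 1) :
    ∀ (n : ℕ) (Y : Finset α), Y.card ≤ n → Y ∈ B → ∀ A ∈ Span B, ¬ Y ⊆ A →
      ∃ b ∈ Y, b ∉ A ∧ A ∪ {b} ∈ Span B := by
  intro n
  induction n with
  | zero =>
    intro Y hY _ A _ hYA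
    exact absurd (Finset.card_eq_zero.1 (Nat.le_zero.1 hY) ▸ Finset.empty_subset A) hYA
  | succ n ih =>
    intro Y hYcard hYB A hA hYA
    have hYne : Y ≠ ∅ := fun h => hYA (h ▸ Finset.empty_subset A)
    obtain ⟨e, he⟩ := Finset.card_eq_one.1 (hB Y hYB hYne)
    by_cases hcase : ∀ y ∈ Y, y ≠ e → y ∈ A
    · -- then e ∉ A, A ∪ {e} = A ∪ Y ∈ Span B
      have heY : e ∈ Y := (mem_endpoints.1 (he ▸ Finset.mem_singleton_self e)).1
      have heA : e ∉ A := by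
        intro heA
        exact hYA fun y hy => by
          by_cases hye : y = e
          · exact hye ▸ heA
          · exact hcase y hy hye
      have hAY : A ∪ Y ∈ Span B := by
        obtain ⟨H, h1, hne1, hs1⟩ := mem_span.1 hA
        refine mem_span.2 ⟨H ∪ {Y}, ?_, hne1.mono Finset.subset_union_left, ?_⟩
        · exact Finset.union_subset h1 (by simpa using hYB)
        · rw [Finset.sup_union, hs1]; simp
      have : A ∪ {e} = A ∪ Y := by
        apply Finset.Subset.antisymm
        · exact Finset.union_subset Finset.subset_union_left
            (by simp [Finset.singleton_subset_iff, heY])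
        · intro y hy
          rcases Finset.mem_union.1 hy with h | h
          · exact Finset.mem_union_left _ h
          · by_cases hye : y = e
            · simp [hye]
            · exact Finset.mem_union_left _ (hcase y h hye)
      exact ⟨e, heY, heA, this ▸ hAY⟩
    · push_neg at hcase
      obtain ⟨y, hyY, hyne, hyA⟩ := hcase
      have : y ∉ endpoints B Y := by rw [he]; simpa using hyne
      rw [mem_endpoints] at this
      push_neg at this
      obtain ⟨Z, hZB, hZY, hyZ⟩ := this hyY
      have hZA : ¬ Z ⊆ A := fun h => hyA (h hyZ)
      have hZcard : Z.card ≤ n :=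
        Nat.lt_succ_iff.1 (lt_of_lt_of_le (Finset.card_lt_card hZY) hYcard)
      obtain ⟨b, hbZ, hb⟩ := ih Z hZcard hZB A hA hZA
      exact ⟨b, hZY.1 hbZ, hb⟩

lemma sd_card {P Q : Finset α} : (symmDiff P Q).card = (P \ Q).card + (Q \ P).card := by
  rw [symmDiff_def]
  exact Finset.card_union_of_disjoint (disjoint_sdiff_sdiff)

lemma sd_insert {A : Finset α} {b : α} (hb : b ∉ A) : symmDiff A (A ∪ {b}) = {b} := by
  ext x
  simp only [Finset.mem_symmDiff, Finset.mem_union, Finset.mem_singleton]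
  constructor
  · rintro (⟨h1, h2⟩ | ⟨h1, h2⟩) <;> tauto
  · rintro rfl; tauto

lemma up_lemma' {B : Finset (Finset α)}
    (hB : ∀ X ∈ B, X ≠ ∅ → (endpoints B X).card = 1)
    {A C : Finset α} (hA : A ∈ Span B) (hC : C ∈ Span B) (h : ¬ C ⊆ A) :
    ∃ b ∈ C, b ∉ A ∧ A ∪ {b} ∈ Span B := by
  obtain ⟨x, hxC, hxA⟩ := Finset.not_subset.1 h
  have hrep := eq_sup_filter_of_mem_span hC
  have : x ∈ (B.filter (· ⊆ C)).sup id := by rw [hrep]; exact hxC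
  obtain ⟨Z, hZ, hxZ⟩ := Finset.mem_sup.1 this
  obtain ⟨hZB, hZC⟩ := Finset.mem_filter.1 hZ
  obtain ⟨b, hbZ, hb⟩ := up_lemma hB Z.card Z le_rfl hZB A hA (fun h => hxA (h hxZ))
  exact ⟨b, hZC hbZ, hb⟩

/-- An increasing tight chain from `A` up to `C`. -/
lemma chain_lemma {B : Finset (Finset α)}
    (hB : ∀ X ∈ B, X ≠ ∅ → (endpoints B X).card = 1) :
    ∀ (n : ℕ) (A C : Finset α), (C \ A).card ≤ n → A ∈ Span B → C ∈ Span B → A ⊆ C →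
      ∃ l : List (Finset α), l.head? = some A ∧ l.getLast? = some C ∧
        l.length = (C \ A).card + 1 ∧ (∀ S ∈ l, S ∈ Span B) ∧
        List.Chain' (fun X Y => (symmDiff X Y).card = 1) l := by
  intro n
  induction n with
  | zero =>
    intro A C hcard hA hC hAC
    have : C ⊆ A := fun x hx => by
      by_contra hxA
      have : x ∈ C \ A := Finset.mem_sdiff.2 ⟨hx, hxA⟩
      simpa using Finset.card_le_card (Finset.singleton_subset_iff.2 this) |>.trans hcard
    have hEq : A = C := Finset.Subset.antisymm hAC this
    exact ⟨[A], rfl, by simp [hEq], by simp [Finset.sdiff_eq_empty_iff_subset.2 this], by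
      simpa using hA, List.isChain_singleton _⟩
  | succ n ih =>
    intro A C hcard hA hC hAC
    by_cases hCA : C ⊆ A
    · have hEq : A = C := Finset.Subset.antisymm hAC hCA
      exact ⟨[A], rfl, by simp [hEq], by simp [Finset.sdiff_eq_empty_iff_subset.2 hCA], by
        simpa using hA, List.isChain_singleton _⟩
    · obtain ⟨b, hbC, hbA, hA'⟩ := up_lemma' hB hA hC hCA
      set A' := A ∪ {b} with hA'def
      have hsub : A' ⊆ C := Finset.union_subset hAC (Finset.singleton_subset_iff.2 hbC)
      have hbCA : b ∈ C \ A := Finset.mem_sdiff.2 ⟨hbC, hbA⟩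
      have hcd : C \ A' = (C \ A).erase b := by
        ext x
        simp only [hA'def, Finset.mem_sdiff, Finset.mem_union, Finset.mem_singleton,
          Finset.mem_erase]
        tauto
      have hcard' : (C \ A').card ≤ n := by
        rw [hcd, Finset.card_erase_of_mem hbCA]
        omega
      obtain ⟨l, hh, hl, hlen, hmem, hch⟩ := ih A' C hcard' hA' hC hsub
      cases l with
      | nil => simp at hh
      | cons S t =>
        have hSA' : S = A' := by simpa using hh
        refine ⟨A :: S :: t, rfl, by rw [List.getLast?_cons_cons]; exact hl, ?_, ?_, ?_⟩
        · have : (C \ A).card = (C \ A').card + 1 := by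
            rw [hcd, Finset.card_erase_of_mem hbCA]
            have : 0 < (C \ A).card := Finset.card_pos.2 ⟨b, hbCA⟩
            omega
          simp only [List.length_cons] at hlen ⊢
          omega
        · intro X hX
          rcases List.mem_cons.1 hX with rfl | h
          · exact hA
          · exact hmem X h
        · show List.IsChain _ _; rw [List.isChain_cons_cons]
          exact ⟨by rw [hSA', sd_insert hbA]; simp, hch⟩

lemma union_mem_span {B : Finset (Finset α)} {S T : Finset α}
    (hS : S ∈ Span B) (hT : T ∈ Span B) : S ∪ T ∈ Span B := by
  obtain ⟨H1, h1, hne1, hs1⟩ := mem_span.1 hS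
  obtain ⟨H2, h2, hne2, hs2⟩ := mem_span.1 hT
  refine mem_span.2 ⟨H1 ∪ H2, Finset.union_subset h1 h2, hne1.mono Finset.subset_union_left, ?_⟩
  rw [Finset.sup_union, hs1, hs2]
  rfl

lemma span_wellGraded {B : Finset (Finset α)} (hempty : (∅ : Finset α) ∈ B)
    (hB : ∀ X ∈ B, X ≠ ∅ → (endpoints B X).card = 1) :
    WellGraded (Span B) := by
  intro P hP Q hQ hPQ
  set rel : Finset α → Finset α → Prop := fun X Y => (symmDiff X Y).card = 1 with hrel
  have hflip : flip rel = rel := by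
    funext X Y
    simp only [flip, hrel, symmDiff_comm]
  set R := P ∪ Q with hRdef
  have hR : R ∈ Span B := union_mem_span hP hQ
  obtain ⟨l1, h1h, h1l, h1len, h1mem, h1ch⟩ :=
    chain_lemma hB (R \ P).card P R le_rfl hP hR Finset.subset_union_left
  obtain ⟨l2, h2h, h2l, h2len, h2mem, h2ch⟩ :=
    chain_lemma hB (R \ Q).card Q R le_rfl hQ hR Finset.subset_union_right
  have hRP : R \ P = Q \ P := by
    ext x; simp only [hRdef, Finset.mem_sdiff, Finset.mem_union]; tauto
  have hRQ : R \ Q = P \ Q := by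
    ext x; simp only [hRdef, Finset.mem_sdiff, Finset.mem_union]; tauto
  have hrev : List.Chain' rel l2.reverse := by
    show List.IsChain _ _; rw [List.isChain_reverse, show (fun a b => rel b a) = rel from hflip]
    exact h2ch
  have hrevh : l2.reverse.head? = some R := by rw [List.head?_reverse]; exact h2l
  have hrevl : l2.reverse.getLast? = some Q := by rw [List.getLast?_reverse]; exact h2h
  obtain ⟨t2, ht2⟩ : ∃ t2, l2.reverse = R :: t2 := by
    cases hl2 : l2.reverse with
    | nil => rw [hl2] at hrevh; simp at hrevh
    | cons a t => rw [hl2] at hrevh; simp at hrevh; exact ⟨t, by rw [hrevh]⟩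
  obtain ⟨t1, ht1⟩ : ∃ t1, l1 = P :: t1 := by
    cases hl1 : l1 with
    | nil => rw [hl1] at h1h; simp at h1h
    | cons a t => rw [hl1] at h1h; simp at h1h; exact ⟨t, by rw [h1h]⟩
  refine ⟨l1 ++ t2, ?_, ?_, ?_, ?_, ?_⟩
  · rw [ht1]; rfl
  · cases ht2' : t2 with
    | nil =>
      rw [ht2, ht2'] at hrevl
      simp only [List.getLast?_singleton, Option.some_inj] at hrevl
      rw [List.append_nil, h1l, hrevl]
    | cons S t2' =>
      rw [List.getLast?_append_cons]
      rw [ht2, ht2', List.getLast?_cons_cons] at hrevl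
      exact hrevl
  · have hlen2 : t2.length = (R \ Q).card := by
      have : l2.reverse.length = (R \ Q).card + 1 := by rw [List.length_reverse]; exact h2len
      rw [ht2] at this; simp at this; omega
    rw [List.length_append, h1len, hlen2, hRP, hRQ, sd_card]
    omega
  · intro S hS
    rcases List.mem_append.1 hS with h | h
    · exact h1mem S h
    · exact h2mem S (List.mem_reverse.1 (ht2 ▸ List.mem_cons_of_mem R h))
  · show List.IsChain _ _; rw [List.isChain_append]
    refine ⟨h1ch, ?_, ?_⟩
    · have := hrev
      rw [ht2] at this
      exact List.IsChain.tail this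
    · intro x hx y hy
      rw [h1l] at hx
      cases ht2' : t2 with
      | nil => rw [ht2'] at hy; simp at hy
      | cons S t2' =>
        rw [ht2'] at hy
        simp only [List.head?_cons, Option.mem_def, Option.some_inj] at hx hy
        subst hx; subst hy
        have := hrev
        rw [ht2, ht2'] at this
        exact (List.isChain_cons_cons.1 this).1

lemma subset_span {B : Finset (Finset α)} : B ⊆ Span B := by
  intro X hX
  exact mem_span.2 ⟨{X}, by simpa using hX, ⟨X, by simp⟩, by simp⟩

lemma span_mono {H B : Finset (Finset α)} (h : H ⊆ B) : Span H ⊆ Span B := by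
  intro S hS
  obtain ⟨G, hG, hne, hsup⟩ := mem_span.1 hS
  exact mem_span.2 ⟨G, hG.trans h, hne, hsup⟩

lemma span_isBase {B : Finset (Finset α)} (hempty : (∅ : Finset α) ∈ B)
    (hB : ∀ X ∈ B, X ≠ ∅ → (endpoints B X).card = 1) :
    IsBase B (Span B) := by
  refine ⟨subset_span, rfl, ?_⟩
  intro H hHB hspan
  apply Finset.Subset.antisymm hHB
  intro X hX
  have hXspan : X ∈ Span H := hspan ▸ subset_span hX
  obtain ⟨G, hGH, hGne, hGsup⟩ := mem_span.1 hXspan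
  by_cases hXne : X = ∅
  · subst hXne
    obtain ⟨Z, hZ⟩ := hGne
    have : Z = ∅ := Finset.subset_empty.1 (hGsup ▸ Finset.le_sup (f := id) hZ)
    exact hGH (this ▸ hZ)
  · by_cases hXG : X ∈ G
    · exact hGH hXG
    · exfalso
      have hsub : ∀ Z ∈ G, Z ⊆ (B.filter fun Y => Y ⊂ X).sup id := by
        intro Z hZ
        have hZX : Z ⊆ X := hGsup ▸ Finset.le_sup (f := id) hZ
        have hZB : Z ∈ B := hHB (hGH hZ)
        have hss : Z ⊂ X := ⟨hZX, fun h => hXG ((Finset.Subset.antisymm hZX h) ▸ hZ)⟩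
        have hmem : Z ∈ B.filter (fun Y => Y ⊂ X) := Finset.mem_filter.2 ⟨hZB, hss⟩
        exact Finset.le_sup (f := id) hmem
      have hXU : X ⊆ (B.filter fun Y => Y ⊂ X).sup id := by
        intro x hx
        rw [← hGsup] at hx
        obtain ⟨Z, hZ, hxZ⟩ := Finset.mem_sup.1 hx
        exact hsub Z hZ hxZ
      have := hB X hX hXne
      obtain ⟨e, he⟩ := Finset.card_eq_one.1 this
      have heX := mem_endpoints.1 (he ▸ Finset.mem_singleton_self e)
      have : e ∈ (B.filter fun Y => Y ⊂ X).sup id := hXU heX.1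
      obtain ⟨Z, hZ, heZ⟩ := Finset.mem_sup.1 this
      obtain ⟨hZB, hZX⟩ := Finset.mem_filter.1 hZ
      exact heX.2 Z hZB hZX heZ

lemma chain_bound : ∀ (p : List (Finset α)),
    List.Chain' (fun X Y => (symmDiff X Y).card = 1) p →
    ∀ A C, p.head? = some A → p.getLast? = some C →
    (symmDiff A C).card + 1 ≤ p.length := by
  intro p
  induction p with
  | nil => intro _ A C h; simp at h
  | cons X t ih =>
    cases t with
    | nil =>
      intro _ A C hA hC
      simp only [List.head?_cons, Option.some_inj] at hA
      simp only [List.getLast?_singleton, Option.some_inj] at hC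
      rw [← hA, ← hC]
      simp
    | cons Y t' =>
      intro hch A C hA hC
      simp only [List.head?_cons, Option.some_inj] at hA
      rw [List.getLast?_cons_cons] at hC
      obtain ⟨hXY, hch'⟩ := List.isChain_cons_cons.1 hch
      have h2 := ih hch' Y C rfl hC
      have htri : (symmDiff X C).card ≤ (symmDiff X Y).card + (symmDiff Y C).card :=
        le_trans (Finset.card_le_card (symmDiff_triangle X Y C)) (Finset.card_union_le _ _)
      rw [← hA]
      simp only [List.length_cons] at h2 ⊢
      omega

lemma forward_dir {B F : Finset (Finset α)} (hempty : (∅ : Finset α) ∈ B)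
    (hWG : WellGraded F) (hbase : IsBase B F) :
    ∀ X ∈ B, X ≠ ∅ → (endpoints B X).card = 1 := by
  obtain ⟨hBF, hSpanF, hmin⟩ := hbase
  intro X hX hXne
  set U := (B.filter fun Y => Y ⊂ X).sup id with hUdef
  have hUX : U ⊆ X := by
    intro x hx
    obtain ⟨Z, hZ, hxZ⟩ := Finset.mem_sup.1 hx
    exact (Finset.mem_filter.1 hZ).2.subset hxZ
  -- Step A : U ≠ X (minimality of the base)
  have hUneX : U ≠ X := by
    intro hUXeq
    have hfne : (B.filter fun Y => Y ⊂ X).Nonempty := by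
      rw [Finset.nonempty_iff_ne_empty]
      intro h
      rw [hUdef, h] at hUXeq
      simp at hUXeq
      exact hXne hUXeq.symm
    have hspan' : Span (B.erase X) = F := by
      apply Finset.Subset.antisymm
      · exact hSpanF ▸ span_mono (Finset.erase_subset X B)
      · intro K hK
        rw [← hSpanF] at hK
        obtain ⟨G, hGB, hGne, hGsup⟩ := mem_span.1 hK
        by_cases hXG : X ∈ G
        · refine mem_span.2 ⟨(G.erase X) ∪ (B.filter fun Y => Y ⊂ X), ?_, ?_, ?_⟩
          · apply Finset.union_subset
            · intro Z hZ
              obtain ⟨hZne, hZG⟩ := Finset.mem_erase.1 hZ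
              exact Finset.mem_erase.2 ⟨hZne, hGB hZG⟩
            · intro Z hZ
              obtain ⟨hZB, hZX⟩ := Finset.mem_filter.1 hZ
              exact Finset.mem_erase.2 ⟨hZX.ne, hZB⟩
          · exact hfne.mono Finset.subset_union_right
          · rw [Finset.sup_union, ← hUdef, hUXeq]
            have : G = insert X (G.erase X) := (Finset.insert_erase hXG).symm
            rw [← hGsup]
            conv_rhs => rw [this]
            rw [Finset.sup_insert]
            rw [sup_comm]
            rfl
        · refine mem_span.2 ⟨G, ?_, hGne, hGsup⟩
          intro Z hZ
          exact Finset.mem_erase.2 ⟨fun h => hXG (h ▸ hZ), hGB hZ⟩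
    have := hmin (B.erase X) (Finset.erase_subset X B) hspan'
    rw [Finset.erase_eq_self] at this
    exact this hX
  have hXsubU : ¬ X ⊆ U := fun h => hUneX (Finset.Subset.antisymm hUX h)
  have hk1 : 1 ≤ (X \ U).card := by
    rw [Nat.one_le_iff_ne_zero, Ne, Finset.card_eq_zero, ← Ne,
      ← Finset.nonempty_iff_ne_empty, Finset.sdiff_nonempty]
    exact hXsubU
  -- endpoints B X = X \ U by definition
  have hend : endpoints B X = X \ U := rfl
  rw [hend]
  -- Step B : (X \ U).card ≤ 1 via well-gradedness
  by_contra hne1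
  have hk2 : 2 ≤ (X \ U).card := by omega
  -- U ∈ F
  have hUF : U ∈ F := by
    rw [← hSpanF]
    refine mem_span.2 ⟨insert ∅ (B.filter fun Y => Y ⊂ X), ?_, ⟨∅, Finset.mem_insert_self _ _⟩, ?_⟩
    · exact Finset.insert_subset hempty (Finset.filter_subset _ _)
    · rw [Finset.sup_insert]
      simp [hUdef]
  have hXF : X ∈ F := hBF hX
  obtain ⟨p, hph, hpl, hplen, hpmem, hpch⟩ := hWG U hUF X hXF hUneX
  have hsdUX : symmDiff U X = X \ U := by
    rw [symmDiff_def]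
    have : U \ X = ∅ := Finset.sdiff_eq_empty_iff_subset.2 hUX
    rw [this]
    simp
  rw [hsdUX] at hplen
  -- p = U :: S :: t
  obtain ⟨t0, ht0⟩ : ∃ t0, p = U :: t0 := by
    cases hp : p with
    | nil => rw [hp] at hph; simp at hph
    | cons a t => rw [hp] at hph; simp at hph; exact ⟨t, by rw [hph]⟩
  obtain ⟨S, t, hst⟩ : ∃ S t, t0 = S :: t := by
    cases ht : t0 with
    | nil =>
      rw [ht0, ht] at hplen
      simp only [List.length_cons, List.length_nil] at hplen
      omega
    | cons S t => exact ⟨S, t, rfl⟩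
  rw [hst] at ht0
  rw [ht0] at hph hpl hplen hpmem hpch
  obtain ⟨hUS, hch'⟩ := List.isChain_cons_cons.1 hpch
  rw [List.getLast?_cons_cons] at hpl
  have hSX : (symmDiff S X).card + 1 ≤ (S :: t).length := chain_bound _ hch' S X rfl hpl
  have hlen' : (S :: t).length = (X \ U).card := by
    simp only [List.length_cons] at hplen ⊢
    omega
  -- triangle equalities
  have htri : symmDiff U X ⊆ symmDiff U S ∪ symmDiff S X := symmDiff_triangle U S X
  have hcards : (symmDiff U S ∪ symmDiff S X).card ≤ (X \ U).card := by
    calc (symmDiff U S ∪ symmDiff S X).card ≤ (symmDiff U S).card + (symmDiff S X).card :=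
          Finset.card_union_le _ _
      _ ≤ (X \ U).card := by rw [hUS]; omega
  have hUSsub : symmDiff U S ⊆ X \ U := by
    have hequnion : symmDiff U X = symmDiff U S ∪ symmDiff S X := by
      apply Finset.eq_of_subset_of_card_le htri
      rw [hsdUX]
      exact hcards
    rw [← hsdUX, hequnion]
    exact Finset.subset_union_left
  have hUsubS : U ⊆ S := by
    intro u hu
    by_contra huS
    have : u ∈ symmDiff U S := Finset.mem_symmDiff.2 (Or.inl ⟨hu, huS⟩)
    exact (Finset.mem_sdiff.1 (hUSsub this)).2 hu
  have hsdUS : symmDiff U S = S \ U := by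
    rw [symmDiff_def]
    have : U \ S = ∅ := Finset.sdiff_eq_empty_iff_subset.2 hUsubS
    rw [this]
    simp
  have hSsubX : S ⊆ X := by
    intro s hs
    by_cases hsU : s ∈ U
    · exact hUX hsU
    · have : s ∈ symmDiff U S := Finset.mem_symmDiff.2 (Or.inr ⟨hs, hsU⟩)
      exact (Finset.mem_sdiff.1 (hUSsub this)).1
  have hSneX : S ≠ X := by
    intro h
    rw [hsdUS, h] at hUS
    omega
  have hSF : S ∈ F := hpmem S (by simp)
  rw [← hSpanF] at hSF
  obtain ⟨G, hGB, hGne, hGsup⟩ := mem_span.1 hSF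
  have hSsubU : S ⊆ U := by
    intro x hx
    rw [← hGsup] at hx
    obtain ⟨Z, hZ, hxZ⟩ := Finset.mem_sup.1 hx
    have hZS : Z ⊆ S := hGsup ▸ Finset.le_sup (f := id) hZ
    have hZX : Z ⊆ X := hZS.trans hSsubX
    have hZneX : Z ≠ X := by
      intro h
      exact hSneX (Finset.Subset.antisymm hSsubX (h ▸ hZS))
    have hmem : Z ∈ B.filter (fun Y => Y ⊂ X) :=
      Finset.mem_filter.2 ⟨hGB hZ, ⟨hZX, fun h => hZneX (Finset.Subset.antisymm hZX h)⟩⟩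
    have : Z ⊆ U := Finset.le_sup (f := id) hmem
    exact this hxZ
  rw [hsdUS] at hUS
  obtain ⟨b, hb⟩ := Finset.card_eq_one.1 hUS
  have hbmem : b ∈ S \ U := hb ▸ Finset.mem_singleton_self b
  obtain ⟨hbS, hbU⟩ := Finset.mem_sdiff.1 hbmem
  exact hbU (hSsubU hbS)

end Helpers

/-- A family containing `∅` is the base of a ∪-closed well-graded family iff every
nonempty member has exactly one endpoint. -/
theorem base_of_wg_iff_one_endpoint (B : Finset (Finset α))
    (hempty : (∅ : Finset α) ∈ B) :
    (∃ F : Finset (Finset α), UnionClosed F ∧ WellGraded F ∧ IsBase B F) ↔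
      ∀ X ∈ B, X ≠ ∅ → (endpoints B X).card = 1 := by
  constructor
  · rintro ⟨F, _hUC, hWG, hbase⟩
    exact forward_dir hempty hWG hbase
  · intro hB
    exact ⟨Span B, span_unionClosed hempty, span_wellGraded hempty hB, span_isBase hempty hB⟩
end

section
/- Let B be the base of a ∪-closed family F, and for X ∈ B let B/X = {Y \ X : Y ∈ B} and F/X = {Y \ X : Y ∈ F}. Then F is well-graded if and only if for each X ∈ B the span of B/X is a well-graded ∪-closed family containing ∅ (i.e., a learning space). -/
open Finset

variable {α : Type*} [DecidableEq α]

-- auxiliary lemmas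

lemma mem_span_iff {G : Finset (Finset α)} {S : Finset α} :
    S ∈ Span G ↔ ∃ H, H ⊆ G ∧ H.Nonempty ∧ H.sup id = S := by
  simp [Span, Finset.mem_image, Finset.mem_filter, Finset.mem_powerset, and_assoc]

lemma unionClosed_span (G : Finset (Finset α)) : UnionClosed (Span G) := by
  intro H hHsub hHne
  rw [mem_span_iff]
  refine ⟨G.filter (fun Y => ∃ S ∈ H, Y ⊆ S), filter_subset _ _, ?_, ?_⟩
  · obtain ⟨S, hS⟩ := hHne
    obtain ⟨K, hKG, hKne, hKsup⟩ := mem_span_iff.1 (hHsub hS)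
    obtain ⟨Y, hY⟩ := hKne
    exact ⟨Y, mem_filter.2 ⟨hKG hY, S, hS, hKsup ▸ le_sup (f := id) hY⟩⟩
  · apply le_antisymm
    · refine Finset.sup_le fun Y hY => ?_
      obtain ⟨_, S, hS, hYS⟩ := mem_filter.1 hY
      exact hYS.trans (le_sup (f := id) hS)
    · refine Finset.sup_le fun S hS => ?_
      obtain ⟨K, hKG, hKne, hKsup⟩ := mem_span_iff.1 (hHsub hS)
      calc (id S : Finset α) = K.sup id := hKsup.symm
        _ ≤ _ := Finset.sup_le fun Y hY => le_sup (f := id)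
            (mem_filter.2 ⟨hKG hY, S, hS, hKsup ▸ le_sup (f := id) hY⟩)

lemma sup_sdiff_eq (H : Finset (Finset α)) (X : Finset α) :
    H.sup (fun Y => Y \ X) = H.sup id \ X := by
  ext a
  simp only [Finset.mem_sup, Finset.mem_sdiff, id]
  tauto

lemma span_image_sdiff (G : Finset (Finset α)) (X : Finset α) :
    Span (G.image (· \ X)) = (Span G).image (· \ X) := by
  ext S
  simp only [mem_span_iff, Finset.mem_image]
  constructor
  · rintro ⟨H', hH'sub, hH'ne, rfl⟩
    refine ⟨(G.filter (fun Y => Y \ X ∈ H')).sup id, ⟨G.filter _, filter_subset _ _, ?_, rfl⟩, ?_⟩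
    · obtain ⟨Z, hZ⟩ := hH'ne
      obtain ⟨Y, hY, rfl⟩ := Finset.mem_image.1 (hH'sub hZ)
      exact ⟨Y, mem_filter.2 ⟨hY, hZ⟩⟩
    · rw [← sup_sdiff_eq]
      apply le_antisymm
      · exact Finset.sup_le fun Y hY => le_sup (f := id) ((mem_filter.1 hY).2)
      · refine Finset.sup_le fun Z hZ => ?_
        obtain ⟨Y, hY, rfl⟩ := Finset.mem_image.1 (hH'sub hZ)
        exact le_sup (α := Finset α) (f := fun Y => Y \ X) (mem_filter.2 ⟨hY, hZ⟩)
  · rintro ⟨T, ⟨H, hHG, hHne, rfl⟩, rfl⟩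
    refine ⟨H.image (· \ X), Finset.image_subset_image hHG, hHne.image _, ?_⟩
    rw [Finset.sup_image, ← sup_sdiff_eq]
    rfl

lemma union_mem {F : Finset (Finset α)} (hF : UnionClosed F) {A B : Finset α}
    (hA : A ∈ F) (hB : B ∈ F) : A ∪ B ∈ F := by
  have h := hF {A, B} (by simp [Finset.insert_subset_iff, hA, hB]) ⟨A, by simp⟩
  simpa using h

lemma card_symmDiff_triangle (A B C : Finset α) :
    (symmDiff A C).card ≤ (symmDiff A B).card + (symmDiff B C).card := by
  have h : symmDiff A C = symmDiff (symmDiff A B) (symmDiff B C) := by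
    rw [symmDiff_assoc, symmDiff_symmDiff_cancel_left]
  rw [h]
  exact le_trans (card_le_card symmDiff_le_sup) (card_union_le _ _)

lemma tight_singleton {F : Finset (Finset α)} {P : Finset α} (hP : P ∈ F) :
    IsTightPath F P P [P] := by
  refine ⟨rfl, rfl, ?_, by simpa using hP, List.isChain_singleton _⟩
  simp [symmDiff_self]

lemma chain'_imp_mem {β : Type*} {R R' : β → β → Prop} :
    ∀ {p : List β}, (∀ a ∈ p, ∀ b ∈ p, R a b → R' a b) → p.Chain' R → p.Chain' R'
  | [], _, _ => List.isChain_nil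
  | [_], _, _ => List.isChain_singleton _
  | a :: b :: t, h, hc => by
    unfold List.Chain' at hc ⊢
    rw [List.isChain_cons_cons] at hc ⊢
    exact ⟨h a (by simp) b (by simp) hc.1,
      chain'_imp_mem (fun x hx y hy => h x (by simp [hx]) y (by simp [hy])) hc.2⟩

lemma chain'_head_last_card :
    ∀ {p : List (Finset α)}, p.Chain' (fun A B => (symmDiff A B).card = 1) →
      ∀ {A B : Finset α}, p.head? = some A → p.getLast? = some B →
      (symmDiff A B).card + 1 ≤ p.length
  | [], _, _, _, hA, _ => by simp at hA
  | [C], _, A, B, hA, hB => by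
    simp at hA hB
    subst hA; subst hB
    simp [symmDiff_self]
  | C :: D :: t, hc, A, B, hA, hB => by
    unfold List.Chain' at hc
    rw [List.isChain_cons_cons] at hc
    obtain rfl : C = A := by simpa using hA
    have hB' : (D :: t).getLast? = some B := hB
    have ih := chain'_head_last_card hc.2 (p := D :: t) rfl hB'
    have htri := card_symmDiff_triangle C D B
    simp only [List.length_cons] at ih ⊢
    omega

lemma tight_tail {F : Finset (Finset α)} {P Q A B : Finset α} {t : List (Finset α)}
    (h : IsTightPath F P Q (A :: B :: t)) :
    IsTightPath F B Q (B :: t) ∧ (symmDiff B Q).card + 1 = (symmDiff A Q).card := by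
  obtain ⟨hh, hl, hlen, hmem, hc⟩ := h
  unfold List.Chain' at hc
  rw [List.isChain_cons_cons] at hc
  obtain rfl : A = P := by simpa using hh
  have hl' : (B :: t).getLast? = some Q := hl
  have hub := chain'_head_last_card hc.2 (p := B :: t) rfl hl'
  have htri := card_symmDiff_triangle A B Q
  simp only [List.length_cons] at hlen hub
  have hkey : (symmDiff B Q).card + 1 = (symmDiff A Q).card := by omega
  exact ⟨⟨rfl, hl', by simp only [List.length_cons]; omega,
    fun S hS => hmem S (List.mem_cons_of_mem _ hS), hc.2⟩, hkey⟩

lemma tight_mem_superset {F : Finset (Finset α)} {X : Finset α} :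
    ∀ {p : List (Finset α)} {P Q : Finset α}, IsTightPath F P Q p →
      X ⊆ P → X ⊆ Q → ∀ S ∈ p, X ⊆ S
  | [], P, Q, h, _, _ => by exact absurd h.1 (by simp)
  | [A], P, Q, h, hXP, hXQ => by
    obtain rfl : A = P := by simpa using h.1
    intro S hS
    rw [List.mem_singleton] at hS; subst hS; exact hXP
  | A :: B :: t, P, Q, h, hXP, hXQ => by
    obtain rfl : A = P := by simpa using h.1
    obtain ⟨htail, hkey⟩ := tight_tail h
    -- show X ⊆ B
    have hcard1 : (symmDiff A B).card = 1 := by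
      have := h.2.2.2.2
      unfold List.Chain' at this
      rw [List.isChain_cons_cons] at this
      exact this.1
    have hXB : X ⊆ B := by
      obtain ⟨e, he⟩ := Finset.card_eq_one.1 hcard1
      have heX : e ∉ X := by
        intro heX
        have heA : e ∈ A := hXP heX
        have heQ : e ∈ Q := hXQ heX
        have heB : e ∉ B := by
          have : e ∈ symmDiff A B := he ▸ Finset.mem_singleton_self e
          rw [Finset.mem_symmDiff] at this
          tauto
        -- B △ Q = {e} △ (A △ Q), e ∉ A △ Q
        have hBQ : symmDiff B Q = symmDiff (symmDiff B A) (symmDiff A Q) := by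
          rw [symmDiff_assoc, symmDiff_symmDiff_cancel_left]
        have heAQ : e ∉ symmDiff A Q := by
          rw [Finset.mem_symmDiff]; tauto
        have hdisj : symmDiff B A = {e} := by rw [symmDiff_comm]; exact he
        have : symmDiff B Q = insert e (symmDiff A Q) := by
          rw [hBQ, hdisj]
          ext a
          simp only [Finset.mem_symmDiff, Finset.mem_singleton, Finset.mem_insert]
          by_cases ha : a = e <;> simp [ha, heAQ] <;> tauto
        have hcardBQ : (symmDiff B Q).card = (symmDiff A Q).card + 1 := by
          rw [this, Finset.card_insert_of_notMem heAQ]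
        omega
      intro x hx
      have hxA : x ∈ A := hXP hx
      by_contra hxB
      have : x ∈ symmDiff A B := Finset.mem_symmDiff.2 (Or.inl ⟨hxA, hxB⟩)
      rw [he, Finset.mem_singleton] at this
      exact heX (this ▸ hx)
    intro S hS
    rcases List.mem_cons.1 hS with rfl | hS
    · exact hXP
    · exact tight_mem_superset htail hXB hXQ S hS

lemma tight_map {F F' : Finset (Finset α)} {P Q : Finset α} {p : List (Finset α)}
    (f : Finset α → Finset α) (h : IsTightPath F P Q p)
    (hmem : ∀ S ∈ p, f S ∈ F')
    (hcard : ∀ S ∈ p, ∀ T ∈ p, (symmDiff (f S) (f T)).card = (symmDiff S T).card) :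
    IsTightPath F' (f P) (f Q) (p.map f) := by
  obtain ⟨hh, hl, hlen, hm, hc⟩ := h
  have hPp : P ∈ p := by
    cases p with
    | nil => simp at hh
    | cons a t => simp at hh; subst hh; exact List.mem_cons_self
  have hQp : Q ∈ p := by
    have := List.mem_getLast?_eq_getLast (l := p) (x := Q) hl
    obtain ⟨hne, rfl⟩ := this
    exact List.getLast_mem hne
  refine ⟨?_, ?_, ?_, ?_, ?_⟩
  · rw [List.head?_map, hh]; rfl
  · rw [List.getLast?_map, hl]; rfl
  · rw [List.length_map, hlen, hcard P hPp Q hQp]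
  · intro S hS
    obtain ⟨T, hT, rfl⟩ := List.mem_map.1 hS
    exact hmem T hT
  · unfold List.Chain' at hc ⊢
    rw [List.isChain_map]
    refine chain'_imp_mem (fun a ha b hb hab => ?_) hc
    rw [hcard a ha b hb]; exact hab

lemma tight_reverse {F : Finset (Finset α)} {P Q : Finset α} {p : List (Finset α)}
    (h : IsTightPath F P Q p) : IsTightPath F Q P p.reverse := by
  obtain ⟨hh, hl, hlen, hm, hc⟩ := h
  refine ⟨?_, ?_, ?_, ?_, ?_⟩
  · rw [List.head?_reverse]; exact hl
  · rw [List.getLast?_reverse]; exact hh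
  · rw [List.length_reverse, hlen, symmDiff_comm]
  · intro S hS; exact hm S (List.mem_reverse.1 hS)
  · unfold List.Chain' at hc ⊢
    rw [List.isChain_reverse]
    refine chain'_imp_mem (fun a _ b _ hab => ?_) hc
    show (symmDiff b a).card = 1
    rw [symmDiff_comm]; exact hab

lemma tight_append {F : Finset (Finset α)} {P M Q : Finset α} {p1 p2 : List (Finset α)}
    (h1 : IsTightPath F P M p1) (h2 : IsTightPath F M Q p2)
    (hlen : (symmDiff P M).card + (symmDiff M Q).card = (symmDiff P Q).card) :
    IsTightPath F P Q (p1 ++ p2.tail) := by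
  obtain ⟨hh1, hl1, hlen1, hm1, hc1⟩ := h1
  obtain ⟨hh2, hl2, hlen2, hm2, hc2⟩ := h2
  obtain ⟨t2, rfl⟩ : ∃ t2, p2 = M :: t2 := by
    cases p2 with
    | nil => simp at hh2
    | cons a t => simp at hh2; subst hh2; exact ⟨t, rfl⟩
  have hp1ne : p1 ≠ [] := by rintro rfl; simp at hh1
  refine ⟨?_, ?_, ?_, ?_, ?_⟩
  · cases p1 with
    | nil => simp at hh1
    | cons a t => simpa using hh1
  · cases t2 with
    | nil =>
      have : M = Q := by simpa using hl2
      subst this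
      simpa using hl1
    | cons b t' =>
      have hl2' : (b :: t').getLast? = some Q := hl2
      exact List.mem_getLast?_append_of_mem_getLast? (l₁ := p1) hl2'
  · rw [List.length_append, hlen1]
    simp only [List.length_cons] at hlen2
    simp only [List.tail_cons]
    omega
  · intro S hS
    rcases List.mem_append.1 hS with hS | hS
    · exact hm1 S hS
    · exact hm2 S (List.mem_cons_of_mem _ hS)
  · unfold List.Chain' at hc1 hc2 ⊢
    rw [List.isChain_append]
    refine ⟨hc1, hc2.tail, fun x hx y hy => ?_⟩
    have hxM : M = x := by rw [hl1] at hx; simpa using hx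
    subst hxM
    rw [List.isChain_cons] at hc2
    exact hc2.1 y hy

lemma symmDiff_sdiff_sdiff (A B X : Finset α) :
    symmDiff (A \ X) (B \ X) = symmDiff A B \ X := by
  ext a
  simp only [Finset.mem_symmDiff, Finset.mem_sdiff]
  tauto

lemma symmDiff_union_union (A B X : Finset α) :
    symmDiff (A ∪ X) (B ∪ X) = symmDiff A B \ X := by
  ext a
  simp only [Finset.mem_symmDiff, Finset.mem_sdiff, Finset.mem_union]
  tauto

/-- forward: project a well-graded family -/
lemma wellGraded_quotient {F : Finset (Finset α)} (hF : UnionClosed F)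
    {X : Finset α} (hX : X ∈ F) (hWG : WellGraded F) :
    WellGraded (F.image (· \ X)) := by
  rintro P' hP' Q' hQ' hne
  obtain ⟨P, hP, rfl⟩ := Finset.mem_image.1 hP'
  obtain ⟨Q, hQ, rfl⟩ := Finset.mem_image.1 hQ'
  set P₁ := P ∪ X with hP₁def
  set Q₁ := Q ∪ X with hQ₁def
  have hP₁ : P₁ ∈ F := union_mem hF hP hX
  have hQ₁ : Q₁ ∈ F := union_mem hF hQ hX
  have hP₁X : P₁ \ X = P \ X := sup_sdiff_right_self
  have hQ₁X : Q₁ \ X = Q \ X := sup_sdiff_right_self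
  have hne₁ : P₁ ≠ Q₁ := by
    intro h
    apply hne
    rw [← hP₁X, ← hQ₁X, h]
  obtain ⟨p, hp⟩ := hWG P₁ hP₁ Q₁ hQ₁ hne₁
  have hsub : ∀ S ∈ p, X ⊆ S :=
    tight_mem_superset hp subset_union_right subset_union_right
  have := tight_map (· \ X) hp
    (fun S hS => Finset.mem_image_of_mem _ (hp.2.2.2.1 S hS))
    (fun S hS T hT => by
      rw [symmDiff_sdiff_sdiff]
      congr 1
      rw [Finset.sdiff_eq_self_iff_disjoint]
      rw [Finset.disjoint_left]
      intro a ha haX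
      rw [Finset.mem_symmDiff] at ha
      have haS : a ∈ S := hsub S hS haX
      have haT : a ∈ T := hsub T hT haX
      tauto)
  have this' : IsTightPath (F.image (· \ X)) (P₁ \ X) (Q₁ \ X) (p.map (· \ X)) := this
  rw [hP₁X, hQ₁X] at this'
  exact ⟨_, this'⟩

/-- backward: lift a tight path from the quotient -/
lemma lift_tight {F : Finset (Finset α)} (hF : UnionClosed F)
    {X : Finset α} (hX : X ∈ F) (hWGq : WellGraded (F.image (· \ X)))
    {P Q : Finset α} (hP : P ∈ F) (hQ : Q ∈ F) (hXP : X ⊆ P) (hXQ : X ⊆ Q)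
    (hne : P ≠ Q) : ∃ p, IsTightPath F P Q p := by
  have hne' : P \ X ≠ Q \ X := by
    intro h
    apply hne
    rw [← Finset.sdiff_union_of_subset hXP, ← Finset.sdiff_union_of_subset hXQ, h]
  obtain ⟨p, hp⟩ := hWGq (P \ X) (Finset.mem_image_of_mem _ hP)
    (Q \ X) (Finset.mem_image_of_mem _ hQ) hne'
  have hdisj : ∀ S ∈ p, Disjoint S X := by
    intro S hS
    obtain ⟨T, _, rfl⟩ := Finset.mem_image.1 (hp.2.2.2.1 S hS)
    exact Finset.sdiff_disjoint
  have hmap := tight_map (F' := F) (· ∪ X) hp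
    (fun S hS => by
      obtain ⟨T, hT, rfl⟩ := Finset.mem_image.1 (hp.2.2.2.1 S hS)
      show T \ X ∪ X ∈ F
      rw [Finset.sdiff_union_self_eq_union]
      exact union_mem hF hT hX)
    (fun S hS T hT => by
      rw [symmDiff_union_union]
      congr 1
      rw [Finset.sdiff_eq_self_iff_disjoint, Finset.disjoint_left]
      intro a ha haX
      rw [Finset.mem_symmDiff] at ha
      have haS : a ∉ S := Finset.disjoint_right.1 (hdisj S hS) haX
      have haT : a ∉ T := Finset.disjoint_right.1 (hdisj T hT) haX
      tauto)
  have hmap' : IsTightPath F ((P \ X) ∪ X) ((Q \ X) ∪ X) (p.map (· ∪ X)) := hmap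
  rw [Finset.sdiff_union_of_subset hXP, Finset.sdiff_union_of_subset hXQ] at hmap'
  exact ⟨_, hmap'⟩


/-- `F` is well-graded iff for each base element `X`, the span of `B/X` is a
learning space. -/
theorem wellGraded_iff_quotients_learning_space (F B : Finset (Finset α))
    (hF : UnionClosed F) (hB : IsBase B F) :
    WellGraded F ↔
      ∀ X ∈ B,
        UnionClosed (Span (B.image (· \ X))) ∧
        WellGraded (Span (B.image (· \ X))) ∧
        (∅ : Finset α) ∈ Span (B.image (· \ X)) := by
  obtain ⟨hBF, hspanB, -⟩ := hB
  have hspan : ∀ X : Finset α, Span (B.image (· \ X)) = F.image (· \ X) := by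
    intro X; rw [span_image_sdiff, hspanB]
  constructor
  · intro hWG X hX
    refine ⟨unionClosed_span _, ?_, ?_⟩
    · rw [hspan]
      exact wellGraded_quotient hF (hBF hX) hWG
    · rw [hspan]
      exact Finset.mem_image.2 ⟨X, hBF hX, by simp⟩
  · intro h
    have hWGq : ∀ X ∈ B, WellGraded (F.image (· \ X)) := by
      intro X hX
      have := (h X hX).2.1
      rwa [hspan] at this
    have hcover : ∀ P ∈ F, ∃ Y ∈ B, Y ⊆ P := by
      intro P hP
      rw [← hspanB] at hP
      obtain ⟨H, hHB, hHne, rfl⟩ := mem_span_iff.1 hP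
      obtain ⟨Y, hY⟩ := hHne
      exact ⟨Y, hHB hY, le_sup (f := id) hY⟩
    have hup : ∀ P ∈ F, ∀ Q ∈ F, P ⊆ Q → ∃ p, IsTightPath F P Q p := by
      intro P hP Q hQ hPQ
      by_cases he : P = Q
      · exact ⟨[P], he ▸ tight_singleton hP⟩
      · obtain ⟨Y, hY, hYP⟩ := hcover P hP
        exact lift_tight hF (hBF hY) (hWGq Y hY) hP hQ hYP (hYP.trans hPQ) he
    intro P hP Q hQ hne
    have hM : P ∪ Q ∈ F := union_mem hF hP hQ
    obtain ⟨p1, hp1⟩ := hup P hP (P ∪ Q) hM subset_union_left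
    obtain ⟨p2, hp2⟩ := hup Q hQ (P ∪ Q) hM subset_union_right
    refine ⟨p1 ++ (p2.reverse).tail, tight_append hp1 (tight_reverse hp2) ?_⟩
    have h1 : symmDiff P (P ∪ Q) = Q \ P := by
      ext a; simp only [Finset.mem_symmDiff, Finset.mem_union, Finset.mem_sdiff]; tauto
    have h2 : symmDiff (P ∪ Q) Q = P \ Q := by
      ext a; simp only [Finset.mem_symmDiff, Finset.mem_union, Finset.mem_sdiff]; tauto
    have h3 : symmDiff P Q = Q \ P ∪ P \ Q := by
      ext a; simp only [Finset.mem_symmDiff, Finset.mem_union, Finset.mem_sdiff]; tauto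
    rw [h1, h2, h3, Finset.card_union_of_disjoint disjoint_sdiff_sdiff]
end
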